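/- Fix ρ > 0 and q ∈ ℕ; for τ ∈ ℝ let χ_τ be the polynomial of degree ≤ q+1 vanishing at all q+1 nodes of the w_τ-Gauß–Radau quadrature (w_τ(x) = e^{−ρτ(x+1)}) and satisfying χ_τ(−1) = 1. For a bounded interval I with a = inf I, b = sup I, |I| = b − a, let φ_I : (−1,1) → I be the affine map x ↦ (a+b)/2 + ((b−a)/2)x. Then for every K ≥ 0: sup over all intervals I ⊆ ℝ with |I| ≤ K of (1/|I|) ∫_I ( χ_{|I|}(φ_I^{−1}(t)) )² e^{−2ρ(t − inf I)} dt is finite. -/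

import Mathlib

open MeasureTheory Real

/-- A (right-sided) `w`-Gauß–Radau quadrature of order `q`, with pairwise distinct nodes
`-1 < r₀ < ⋯ < r_q = 1`, exact for polynomials of degree at most `2q`. -/
def IsGaussRadauQuad (q : ℕ) (w : ℝ → ℝ) (ω r : Fin (q + 1) → ℝ) : Prop :=
  (∀ j, r j ∈ Set.Ioc (-1 : ℝ) 1) ∧ StrictMono r ∧ r (Fin.last q) = 1 ∧
    ∀ p : Polynomial ℝ, p.natDegree ≤ 2 * q →
      ∫ x in Set.Ioo (-1 : ℝ) 1, p.eval x * w x = ∑ j, ω j * p.eval (r j)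


set_option maxHeartbeats 1000000
open Set Polynomial
open scoped ENNReal


lemma contIntOn {f : ℝ → ℝ} (hf : Continuous f) (a b : ℝ) :
    IntegrableOn f (Set.Ioo a b) := by
  exact (hf.integrableOn_Icc).mono_set Set.Ioo_subset_Icc_self

lemma pos_int (g : ℝ → ℝ) (hg : Continuous g) (hgpos : ∀ x ∈ Set.Ioo (-1:ℝ) 1, 0 < g x)
    (p : Polynomial ℝ) (hp : p ≠ 0) :
    0 < ∫ x in Set.Ioo (-1:ℝ) 1, g x * p.eval x ^ 2 := by
  have hcont : Continuous fun x => g x * p.eval x ^ 2 :=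
    hg.mul ((p.continuous_aeval).pow 2)
  have hint : IntegrableOn (fun x => g x * p.eval x ^ 2) (Set.Ioo (-1:ℝ) 1) :=
    contIntOn hcont _ _
  have hnn : 0 ≤ᵐ[volume.restrict (Set.Ioo (-1:ℝ) 1)] fun x => g x * p.eval x ^ 2 := by
    filter_upwards [ae_restrict_mem measurableSet_Ioo] with x hx
    exact mul_nonneg (hgpos x hx).le (sq_nonneg _)
  rw [setIntegral_pos_iff_support_of_nonneg_ae hnn hint]
  have hsub : Set.Ioo (-1:ℝ) 1 \ {x | p.eval x = 0} ⊆
      (Function.support fun x => g x * p.eval x ^ 2) ∩ Set.Ioo (-1:ℝ) 1 := by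
    rintro x ⟨hx, hx0⟩
    refine ⟨?_, hx⟩
    simp only [Function.mem_support]
    exact mul_ne_zero (hgpos x hx).ne' (pow_ne_zero _ (by simpa using hx0))
  have hroots : volume {x : ℝ | p.eval x = 0} = 0 := by
    have : {x : ℝ | p.eval x = 0}.Finite := by
      simpa [Polynomial.IsRoot] using Polynomial.finite_setOf_isRoot hp
    exact this.measure_zero _
  calc (0:ℝ≥0∞) < volume (Set.Ioo (-1:ℝ) 1) - volume {x : ℝ | p.eval x = 0} := by
        rw [hroots]; simp [Real.volume_Ioo]
    _ ≤ volume (Set.Ioo (-1:ℝ) 1 \ {x | p.eval x = 0}) := le_measure_diff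
    _ ≤ _ := measure_mono hsub


noncomputable def Mij (g : ℝ → ℝ) (i j : ℕ) : ℝ :=
  ∫ x in Set.Ioo (-1:ℝ) 1, g x * x ^ i * x ^ j

noncomputable def Fq (n : ℕ) (g : ℝ → ℝ) (c : EuclideanSpace ℝ (Fin (n+1))) : ℝ :=
  ∑ i : Fin (n+1), ∑ j : Fin (n+1), (c i * c j) * Mij g i j

lemma quadform (n : ℕ) (g : ℝ → ℝ) (hg : Continuous g) (c : EuclideanSpace ℝ (Fin (n+1))) :
    ∫ x in Set.Ioo (-1:ℝ) 1, g x * (∑ i : Fin (n+1), c i * x ^ (i:ℕ)) ^ 2 = Fq n g c := by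
  have h1 : ∀ x : ℝ, g x * (∑ i : Fin (n+1), c i * x ^ (i:ℕ)) ^ 2
      = ∑ i : Fin (n+1), ∑ j : Fin (n+1), (c i * c j) * (g x * x ^ (i:ℕ) * x ^ (j:ℕ)) := by
    intro x
    rw [sq, Finset.sum_mul_sum, Finset.mul_sum]
    congr 1; ext i
    rw [Finset.mul_sum]
    congr 1; ext j
    ring
  simp_rw [h1]
  rw [integral_finset_sum]
  · congr 1; ext i
    rw [integral_finset_sum]
    · congr 1; ext j
      rw [MeasureTheory.integral_const_mul]; rfl
    · intro j _
      exact (Continuous.integrableOn_Icc (continuous_const.mul ((hg.mul (continuous_pow _)).mul (continuous_pow _)))).mono_set Set.Ioo_subset_Icc_self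
  · intro i _
    have : Continuous fun x : ℝ => ∑ j : Fin (n+1), (c i * c j) * (g x * x ^ (i:ℕ) * x ^ (j:ℕ)) := by
      apply continuous_finset_sum; intro j _
      exact continuous_const.mul ((hg.mul (continuous_pow _)).mul (continuous_pow _))
    exact (Continuous.integrableOn_Icc this).mono_set Set.Ioo_subset_Icc_self

lemma Fq_continuous (n : ℕ) (g : ℝ → ℝ) : Continuous (Fq n g) := by
  unfold Fq
  apply continuous_finset_sum; intro i _
  apply continuous_finset_sum; intro j _
  exact ((((continuous_apply i).comp (PiLp.continuous_ofLp 2 _)).mul ((continuous_apply j).comp (PiLp.continuous_ofLp 2 _))).mul continuous_const)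

lemma Fq_smul (n : ℕ) (g : ℝ → ℝ) (a : ℝ) (c : EuclideanSpace ℝ (Fin (n+1))) :
    Fq n g (a • c) = a ^ 2 * Fq n g c := by
  unfold Fq
  rw [Finset.mul_sum]
  congr 1; ext i
  rw [Finset.mul_sum]
  congr 1; ext j
  show (a * c i) * (a * c j) * _ = _
  ring

noncomputable def Pc (n : ℕ) (c : EuclideanSpace ℝ (Fin (n+1))) : Polynomial ℝ :=
  ∑ i : Fin (n+1), Polynomial.C (c i) * Polynomial.X ^ (i:ℕ)

lemma Pc_eval (n : ℕ) (c : EuclideanSpace ℝ (Fin (n+1))) (x : ℝ) :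
    (Pc n c).eval x = ∑ i : Fin (n+1), c i * x ^ (i:ℕ) := by
  simp [Pc, Polynomial.eval_finset_sum]

lemma Pc_ne_zero (n : ℕ) (c : EuclideanSpace ℝ (Fin (n+1))) (hc : c ≠ 0) : Pc n c ≠ 0 := by
  obtain ⟨i, hi⟩ : ∃ i, c i ≠ 0 := by
    by_contra h; push_neg at h; exact hc ((WithLp.ext_iff 2).mpr (funext h))
  intro h0
  have : (Pc n c).coeff (i:ℕ) = c i := by
    simp only [Pc, Polynomial.finset_sum_coeff, Polynomial.coeff_C_mul, Polynomial.coeff_X_pow]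
    rw [Finset.sum_eq_single i]
    · simp
    · intro j _ hji
      simp [fun h => hji (Fin.val_injective h : j = i), Ne.symm]
      intro h; exact absurd (Fin.val_injective h.symm) hji
    · simp
  rw [h0] at this
  simp at this
  exact hi this.symm

lemma normequiv (n : ℕ) : ∃ ε : ℝ, 0 < ε ∧ ∀ s : Polynomial ℝ, s.natDegree ≤ n →
    ε * ∫ x in Set.Ioo (-1:ℝ) 1, (1-x) * s.eval x ^ 2
      ≤ ∫ x in Set.Ioo (-1:ℝ) 1, (1-x^2) * s.eval x ^ 2 := by
  set g1 : ℝ → ℝ := fun x => 1 - x with hg1def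
  set g2 : ℝ → ℝ := fun x => 1 - x^2 with hg2def
  have hg1 : Continuous g1 := by continuity
  have hg2 : Continuous g2 := by continuity
  have hS : (Metric.sphere (0 : EuclideanSpace ℝ (Fin (n+1))) 1).Nonempty := by
    refine ⟨EuclideanSpace.single 0 1, ?_⟩
    simp [mem_sphere_zero_iff_norm, EuclideanSpace.norm_single]
  obtain ⟨c₀, hc₀S, hmin⟩ := (isCompact_sphere (0 : EuclideanSpace ℝ (Fin (n+1))) 1
    ).exists_isMinOn hS (Fq_continuous n g2).continuousOn
  obtain ⟨c₁, hc₁S, hmax⟩ := (isCompact_sphere (0 : EuclideanSpace ℝ (Fin (n+1))) 1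
    ).exists_isMaxOn hS (Fq_continuous n g1).continuousOn
  -- Fq on the sphere, via polynomials
  have hFq_poly : ∀ (g : ℝ → ℝ), Continuous g → ∀ c : EuclideanSpace ℝ (Fin (n+1)),
      Fq n g c = ∫ x in Set.Ioo (-1:ℝ) 1, g x * (Pc n c).eval x ^ 2 := by
    intro g hg c
    rw [← quadform n g hg c]
    congr 1; ext x; rw [Pc_eval]
  have hDmin : 0 < Fq n g2 c₀ := by
    have hc₀ne : c₀ ≠ 0 := by
      intro h; rw [h] at hc₀S; simp at hc₀S
    rw [hFq_poly g2 hg2 c₀]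
    apply pos_int g2 hg2 ?_ _ (Pc_ne_zero n c₀ hc₀ne)
    intro x hx
    simp only [hg2def]
    nlinarith [hx.1, hx.2]
  have hNnn : ∀ c : EuclideanSpace ℝ (Fin (n+1)), 0 ≤ Fq n g1 c := by
    intro c
    rw [hFq_poly g1 hg1 c]
    apply setIntegral_nonneg measurableSet_Ioo
    intro x hx
    have : (0:ℝ) ≤ 1 - x := by nlinarith [hx.2]
    exact mul_nonneg this (sq_nonneg _)
  set Dm := Fq n g2 c₀ with hDm
  set Nm := Fq n g1 c₁ with hNm
  have hNm0 : 0 ≤ Nm := hNnn c₁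
  refine ⟨Dm / (Nm + 1), div_pos hDmin (by linarith), ?_⟩
  intro s hs
  -- coefficients of s
  set c : EuclideanSpace ℝ (Fin (n+1)) := WithLp.toLp 2 (fun i : Fin (n+1) => s.coeff i) with hc
  have hev : ∀ x : ℝ, s.eval x = ∑ i : Fin (n+1), c i * x ^ (i:ℕ) := by
    intro x
    rw [Polynomial.eval_eq_sum_range' (Nat.lt_succ_of_le hs), Finset.sum_range fun i => s.coeff i * x ^ i]
  have hint1 : (∫ x in Set.Ioo (-1:ℝ) 1, (1-x) * s.eval x ^ 2) = Fq n g1 c := by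
    rw [← quadform n g1 hg1 c]; congr 1; ext x; rw [hev]
  have hint2 : (∫ x in Set.Ioo (-1:ℝ) 1, (1-x^2) * s.eval x ^ 2) = Fq n g2 c := by
    rw [← quadform n g2 hg2 c]; congr 1; ext x; rw [hev]
  rw [hint1, hint2]
  rcases eq_or_ne c 0 with h0 | h0
  · rw [h0]
    have hz : ∀ g : ℝ → ℝ, Fq n g (0 : EuclideanSpace ℝ (Fin (n+1))) = 0 := by
      intro g
      have := Fq_smul n g 0 0
      simpa using this
    rw [hz g1, hz g2]
    simp
  · set t := ‖c‖ with ht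
    have htpos : 0 < t := norm_pos_iff.mpr h0
    set cc := t⁻¹ • c with hcc
    have hccS : cc ∈ Metric.sphere (0 : EuclideanSpace ℝ (Fin (n+1))) 1 := by
      rw [mem_sphere_zero_iff_norm, hcc, norm_smul, Real.norm_eq_abs, abs_of_pos (inv_pos.mpr htpos)]
      rw [← ht]; field_simp
    have hct : c = t • cc := by
      rw [hcc, smul_smul, mul_inv_cancel₀ htpos.ne', one_smul]
    have h1 : Fq n g1 c = t^2 * Fq n g1 cc := by rw [hct, Fq_smul]
    have h2 : Fq n g2 c = t^2 * Fq n g2 cc := by rw [hct, Fq_smul]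
    have hle1 : Fq n g1 cc ≤ Nm := hmax hccS
    have hle2 : Dm ≤ Fq n g2 cc := hmin hccS
    have hccnn : 0 ≤ Fq n g1 cc := hNnn cc
    rw [h1, h2]
    rw [div_mul_eq_mul_div, div_le_iff₀ (by linarith)]
    have hA : t^2 * Fq n g1 cc ≤ t^2*(Nm+1) := by nlinarith [sq_nonneg t]
    nlinarith [mul_le_mul_of_nonneg_left hA hDmin.le,
      mul_le_mul_of_nonneg_right hle2 (mul_nonneg (sq_nonneg t) (by linarith : (0:ℝ) ≤ Nm + 1))]

lemma node_bound (ρ : ℝ) (hρ : 0 < ρ) (q : ℕ) (ω r : Fin (q+1) → ℝ) (τ : ℝ) (hτ0 : 0 ≤ τ)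
    (h : IsGaussRadauQuad q (fun x => Real.exp (-ρ*τ*(x+1))) ω r)
    (ε : ℝ) (hε : 0 < ε)
    (hεnorm : ∀ s : Polynomial ℝ, s.natDegree ≤ q - 1 →
      ε * ∫ x in Set.Ioo (-1:ℝ) 1, (1-x) * s.eval x ^ 2
        ≤ ∫ x in Set.Ioo (-1:ℝ) 1, (1-x^2) * s.eval x ^ 2)
    (m : ℝ) (hm : 0 < m)
    (hmw : ∀ x ∈ Set.Ioo (-1:ℝ) 1, m ≤ Real.exp (-ρ*τ*(x+1))) :
    ∀ j, min (m*ε) 2 ≤ 1 + r j := by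
  obtain ⟨hmem, hmono, hlast, hquad⟩ := h
  rcases Nat.eq_zero_or_pos q with hq0 | hq
  · intro j
    subst hq0
    have hj : j = Fin.last 0 := by
      have := j.isLt
      ext
      omega
    rw [hj, hlast]
    have : min (m*ε) 2 ≤ 2 := min_le_right _ _
    linarith
  · -- main case
    have key : m * ε ≤ 1 + r 0 := by
      set w : ℝ → ℝ := fun x => Real.exp (-ρ*τ*(x+1)) with hw
      set s : Polynomial ℝ :=
        ∏ k ∈ Finset.Ioo (0 : Fin (q+1)) (Fin.last q), (X - C (r k)) with hs
      have hsmonic : s.Monic := monic_prod_of_monic _ _ (fun k _ => monic_X_sub_C _)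
      have hsne : s ≠ 0 := hsmonic.ne_zero
      have hsdeg : s.natDegree ≤ q - 1 := by
        rw [hs, Polynomial.natDegree_prod _ _ (fun k _ => X_sub_C_ne_zero _)]
        simp only [natDegree_X_sub_C, Finset.sum_const, smul_eq_mul, mul_one]
        have : (Finset.Ioo (0 : Fin (q+1)) (Fin.last q)).card = q - 1 := by
          rw [Fin.card_Ioo]
          simp [Fin.last]
        omega
      -- s vanishes at interior nodes
      have hsval : ∀ j : Fin (q+1), j ≠ 0 → j ≠ Fin.last q → s.eval (r j) = 0 := by
        intro j hj0 hjl
        rw [hs, Polynomial.eval_prod]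
        apply Finset.prod_eq_zero (i := j)
        · rw [Finset.mem_Ioo]
          exact ⟨Fin.pos_of_ne_zero hj0, lt_of_le_of_ne (Fin.le_last j) hjl⟩
        · simp
      -- the two quadrature identities
      set p1 : Polynomial ℝ := (1 - X) * (1 + X) * s^2 with hp1
      set p2 : Polynomial ℝ := (1 - X) * s^2 with hp2
      have hd1 : natDegree (1 - X : Polynomial ℝ) ≤ 1 := by
        compute_degree
      have hd1' : natDegree (1 + X : Polynomial ℝ) ≤ 1 := by
        compute_degree
      have hp1deg : p1.natDegree ≤ 2*q := by
        calc p1.natDegree ≤ ((1-X)*(1+X) : Polynomial ℝ).natDegree + (s^2).natDegree :=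
              natDegree_mul_le
          _ ≤ ((1-X : Polynomial ℝ).natDegree + (1+X : Polynomial ℝ).natDegree)
                + 2 * s.natDegree := by
              gcongr
              · exact natDegree_mul_le
              · exact natDegree_pow_le
          _ ≤ 2*q := by omega
      have hp2deg : p2.natDegree ≤ 2*q := by
        calc p2.natDegree ≤ (1-X : Polynomial ℝ).natDegree + (s^2).natDegree :=
              natDegree_mul_le
          _ ≤ 1 + 2 * s.natDegree := by
              gcongr
              exact natDegree_pow_le
          _ ≤ 2*q := by omega
      have hq1 := hquad p1 hp1deg
      have hq2 := hquad p2 hp2deg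
      -- sums reduce to the j = 0 term
      have hsum1 : ∑ j, ω j * p1.eval (r j) = ω 0 * ((1 - r 0) * (1 + r 0) * s.eval (r 0) ^ 2) := by
        rw [Finset.sum_eq_single_of_mem 0 (Finset.mem_univ _)]
        · simp [hp1]
        · intro j _ hj0
          rcases eq_or_ne j (Fin.last q) with hjl | hjl
          · subst hjl
            simp [hp1, hlast]
          · simp [hp1, hsval j hj0 hjl]
      have hsum2 : ∑ j, ω j * p2.eval (r j) = ω 0 * ((1 - r 0) * s.eval (r 0) ^ 2) := by
        rw [Finset.sum_eq_single_of_mem 0 (Finset.mem_univ _)]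
        · simp [hp2]
        · intro j _ hj0
          rcases eq_or_ne j (Fin.last q) with hjl | hjl
          · subst hjl
            simp [hp2, hlast]
          · simp [hp2, hsval j hj0 hjl]
      set A := ∫ x in Set.Ioo (-1:ℝ) 1, p1.eval x * w x with hA
      set B := ∫ x in Set.Ioo (-1:ℝ) 1, p2.eval x * w x with hB
      have hAB : A = (1 + r 0) * B := by
        rw [hq1, hq2, hsum1, hsum2]; ring
      have hscont : Continuous fun x : ℝ => s.eval x := s.continuous_aeval
      have hwcont : Continuous w := by fun_prop
      -- B > 0
      have hBpos : 0 < B := by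
        have : B = ∫ x in Set.Ioo (-1:ℝ) 1, ((1-x) * w x) * s.eval x ^ 2 := by
          rw [hB]; congr 1; ext x; simp [hp2]; ring
        rw [this]
        apply pos_int _ (by fun_prop) _ _ hsne
        intro x hx
        exact mul_pos (by linarith [hx.2]) (Real.exp_pos _)
      -- B ≤ ∫ (1-x) s²
      have hBle : B ≤ ∫ x in Set.Ioo (-1:ℝ) 1, (1-x) * s.eval x ^ 2 := by
        rw [hB]
        apply setIntegral_mono_on
        · exact contIntOn (by fun_prop) _ _
        · exact contIntOn (by fun_prop) _ _
        · exact measurableSet_Ioo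
        · intro x hx
          have h1 : p2.eval x * w x = ((1-x) * s.eval x ^ 2) * w x := by
            rw [hp2]; simp only [eval_mul, eval_sub, eval_one, eval_X, eval_pow]; try ring
          rw [h1]
          have hw1 : w x ≤ 1 := by
            rw [hw]
            apply Real.exp_le_one_iff.mpr
            have hx1 : 0 ≤ x + 1 := by linarith [hx.1]
            nlinarith [mul_nonneg (mul_nonneg hρ.le hτ0) hx1]
          have hnn : 0 ≤ (1-x) * s.eval x ^ 2 :=
            mul_nonneg (by linarith [hx.2]) (sq_nonneg _)
          nlinarith
      -- A ≥ m ∫ (1-x²) s²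
      have hAge : m * (∫ x in Set.Ioo (-1:ℝ) 1, (1-x^2) * s.eval x ^ 2) ≤ A := by
        rw [hA, ← integral_const_mul]
        apply setIntegral_mono_on
        · exact contIntOn (by fun_prop) _ _
        · exact contIntOn (by fun_prop) _ _
        · exact measurableSet_Ioo
        · intro x hx
          have h1 : p1.eval x * w x = ((1-x^2) * s.eval x ^ 2) * w x := by
            rw [hp1]; simp only [eval_mul, eval_sub, eval_add, eval_one, eval_X, eval_pow]; try ring
          rw [h1]
          have hnn : 0 ≤ (1-x^2) * s.eval x ^ 2 := by
            apply mul_nonneg _ (sq_nonneg _)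
            nlinarith [hx.1, hx.2]
          have := hmw x hx
          nlinarith
      have hnorm := hεnorm s hsdeg
      -- chain
      have : m * ε * B ≤ (1 + r 0) * B := by
        rw [← hAB]
        calc m * ε * B ≤ m * (ε * ∫ x in Set.Ioo (-1:ℝ) 1, (1-x) * s.eval x ^ 2) := by
              have : ε * B ≤ ε * ∫ x in Set.Ioo (-1:ℝ) 1, (1-x) * s.eval x ^ 2 :=
                mul_le_mul_of_nonneg_left hBle hε.le
              nlinarith
          _ ≤ m * ∫ x in Set.Ioo (-1:ℝ) 1, (1-x^2) * s.eval x ^ 2 :=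
              mul_le_mul_of_nonneg_left hnorm hm.le
          _ ≤ A := hAge
      have := le_of_mul_le_mul_right (by linarith : m * ε * B ≤ (1 + r 0) * B) hBpos
      linarith [this]
    intro j
    have : r 0 ≤ r j := hmono.monotone (Fin.zero_le j)
    have h2 : min (m*ε) 2 ≤ m * ε := min_le_left _ _
    linarith

lemma chi_bound (q : ℕ) (r : Fin (q+1) → ℝ) (hmono : StrictMono r)
    (hmem : ∀ j, r j ∈ Set.Ioc (-1:ℝ) 1)
    (χ : Polynomial ℝ) (hdeg : χ.natDegree ≤ q+1) (h0 : ∀ j, χ.eval (r j) = 0)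
    (h1 : χ.eval (-1) = 1)
    (c0 : ℝ) (hc0pos : 0 < c0) (hc0 : ∀ j, c0 ≤ 1 + r j) :
    ∀ x ∈ Set.Icc (-1:ℝ) 1, |χ.eval x| ≤ 2^(q+1) / c0^(q+1) := by
  set pp : Polynomial ℝ := ∏ j : Fin (q+1), (X - C (r j)) with hpp
  have hdvd : pp ∣ χ := by
    apply Finset.prod_dvd_of_coprime
    · exact ((Polynomial.pairwise_coprime_X_sub_C hmono.injective).set_pairwise _)
    · intro j _
      exact dvd_iff_isRoot.mpr (h0 j)
  obtain ⟨g, hg⟩ := hdvd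
  have hχne : χ ≠ 0 := by
    intro h; rw [h] at h1; simp at h1
  have hgne : g ≠ 0 := by
    intro h; rw [h, mul_zero] at hg; exact hχne hg
  have hppdeg : pp.natDegree = q + 1 := by
    rw [hpp, Polynomial.natDegree_prod _ _ (fun k _ => X_sub_C_ne_zero _)]
    simp
  have hppne : pp ≠ 0 :=
    Monic.ne_zero (monic_prod_of_monic _ _ (fun k _ => monic_X_sub_C _))
  have hgdeg : g.natDegree = 0 := by
    have hmul := Polynomial.natDegree_mul hppne hgne
    rw [hg] at hdeg
    rw [hmul, hppdeg] at hdeg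
    omega
  obtain ⟨a, ha⟩ := Polynomial.natDegree_eq_zero.mp hgdeg
  have hppeval : ∀ x : ℝ, pp.eval x = ∏ j : Fin (q+1), (x - r j) := by
    intro x; rw [hpp, Polynomial.eval_prod]; simp
  have habs : |pp.eval (-1)| = ∏ j : Fin (q+1), (1 + r j) := by
    rw [hppeval, Finset.abs_prod]
    congr 1; ext j
    rw [abs_of_nonpos (by linarith [(hmem j).1])]
    ring
  have hpplb : c0^(q+1) ≤ |pp.eval (-1)| := by
    rw [habs]
    calc c0^(q+1) = ∏ _j : Fin (q+1), c0 := by simp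
      _ ≤ ∏ j : Fin (q+1), (1 + r j) := by
          apply Finset.prod_le_prod (fun j _ => hc0pos.le) (fun j _ => hc0 j)
  have hev1 : pp.eval (-1) * a = 1 := by
    have := h1
    rw [hg, ← ha, Polynomial.eval_mul, Polynomial.eval_C] at this
    exact this
  have hppne1 : pp.eval (-1) ≠ 0 := by
    intro h; rw [h, zero_mul] at hev1; norm_num at hev1
  have haabs : |a| ≤ 1 / c0^(q+1) := by
    have h2 : |pp.eval (-1)| * |a| = 1 := by
      rw [← abs_mul, hev1]; norm_num
    have hc0p : (0:ℝ) < c0^(q+1) := pow_pos hc0pos _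
    rw [le_div_iff₀ hc0p]
    calc |a| * c0^(q+1) ≤ |a| * |pp.eval (-1)| :=
          mul_le_mul_of_nonneg_left hpplb (abs_nonneg _)
      _ = 1 := by rw [mul_comm]; exact h2
  intro x hx
  have hppub : |pp.eval x| ≤ 2^(q+1) := by
    rw [hppeval, Finset.abs_prod]
    calc ∏ j : Fin (q+1), |x - r j| ≤ ∏ _j : Fin (q+1), (2:ℝ) := by
          apply Finset.prod_le_prod (fun j _ => abs_nonneg _)
          intro j _
          rw [abs_le]
          constructor <;> [linarith [hx.1, (hmem j).2]; linarith [hx.2, (hmem j).1]]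
      _ = 2^(q+1) := by simp
  have : |χ.eval x| = |pp.eval x| * |a| := by
    rw [hg, ← ha, Polynomial.eval_mul, Polynomial.eval_C, abs_mul]
  rw [this]
  calc |pp.eval x| * |a| ≤ 2^(q+1) * (1/c0^(q+1)) := by
        apply mul_le_mul hppub haabs (abs_nonneg _) (by positivity)
    _ = 2^(q+1) / c0^(q+1) := by ring

/-- Corollary `c:chi2`: with `w_τ(x) = exp(-ρτ(x+1))`, `χ_τ` the polynomial of degree
`≤ q+1` vanishing at the Gauß–Radau nodes of `w_τ` with `χ_τ(-1) = 1`, and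
`φ_I : (-1,1) → I` the affine parametrisation of a bounded interval `I = (a,b)`, the
quantities `(1/|I|) ∫_I χ_{|I|}(φ_I⁻¹(t))² e^{-2ρ(t - inf I)} dt` are bounded uniformly
over all intervals `I` with `|I| ≤ K`. -/
theorem stmt_18 (ρ : ℝ) (hρ : 0 < ρ) (q : ℕ)
    (ω r : ℝ → Fin (q + 1) → ℝ)
    (hGR : ∀ τ : ℝ,
      IsGaussRadauQuad q (fun x => Real.exp (-ρ * τ * (x + 1))) (ω τ) (r τ))
    (χ : ℝ → Polynomial ℝ)
    (hχdeg : ∀ τ, (χ τ).natDegree ≤ q + 1)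
    (hχ0 : ∀ τ, ∀ j, (χ τ).eval (r τ j) = 0)
    (hχ1 : ∀ τ, (χ τ).eval (-1) = 1)
    (K : ℝ) (hK : 0 ≤ K) :
    ∃ C : ℝ, ∀ a b : ℝ, a < b → b - a ≤ K →
      (1 / (b - a)) * ∫ t in Set.Ioo a b,
          ((χ (b - a)).eval ((2 * t - (a + b)) / (b - a))) ^ 2 *
            Real.exp (-2 * ρ * (t - a)) ≤ C := by
  obtain ⟨ε, hε, hεnorm⟩ := normequiv (q - 1)
  set m : ℝ := Real.exp (-2*ρ*K) with hm
  have hmpos : 0 < m := Real.exp_pos _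
  set c0 : ℝ := min (m*ε) 2 with hc0
  have hc0pos : 0 < c0 := lt_min (mul_pos hmpos hε) (by norm_num)
  set M : ℝ := 2^(q+1) / c0^(q+1) with hM
  have hMpos : 0 < M := by positivity
  refine ⟨M^2, ?_⟩
  intro a b hab hbaK
  set τ : ℝ := b - a with hτ
  have hτpos : 0 < τ := by simp [hτ]; linarith
  have hmw : ∀ x ∈ Set.Ioo (-1:ℝ) 1, m ≤ Real.exp (-ρ*τ*(x+1)) := by
    intro x hx
    rw [hm]
    apply Real.exp_le_exp.mpr
    have h1 : 0 ≤ x + 1 := by linarith [hx.1]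
    have h2 : x + 1 ≤ 2 := by linarith [hx.2]
    have e1 : ρ * τ * (x+1) ≤ ρ * τ * 2 :=
      mul_le_mul_of_nonneg_left h2 (mul_nonneg hρ.le hτpos.le)
    have e2 : ρ * τ ≤ ρ * K := mul_le_mul_of_nonneg_left hbaK hρ.le
    linarith [e1, e2]
  have hnodes := node_bound ρ hρ q (ω τ) (r τ) τ hτpos.le (hGR τ) ε hε hεnorm m hmpos hmw
  have hchi : ∀ x ∈ Set.Icc (-1:ℝ) 1, |(χ τ).eval x| ≤ M := by
    have h := (hGR τ)
    exact chi_bound q (r τ) h.2.1 h.1 (χ τ) (hχdeg τ) (hχ0 τ) (hχ1 τ) c0 hc0pos hnodes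
  -- pointwise bound on the integrand
  have hpt : ∀ t ∈ Set.Ioo a b,
      ((χ (b-a)).eval ((2*t - (a+b)) / (b-a))) ^ 2 * Real.exp (-2*ρ*(t-a)) ≤ M^2 := by
    intro t ht
    set y : ℝ := (2*t - (a+b)) / (b-a) with hy
    have hy1 : -1 ≤ y := by
      rw [hy, le_div_iff₀ (by linarith : (0:ℝ) < b - a)]
      linarith [ht.1]
    have hy2 : y ≤ 1 := by
      rw [hy, div_le_one (by linarith : (0:ℝ) < b - a)]
      linarith [ht.2]
    have hχy : |(χ τ).eval y| ≤ M := hchi y ⟨hy1, hy2⟩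
    have hsq : ((χ (b-a)).eval y)^2 ≤ M^2 := by
      rw [← hτ]
      rw [← sq_abs]
      exact pow_le_pow_left₀ (abs_nonneg _) hχy 2
    have hexp : Real.exp (-2*ρ*(t-a)) ≤ 1 := by
      apply Real.exp_le_one_iff.mpr
      nlinarith [ht.1]
    calc ((χ (b-a)).eval y)^2 * Real.exp (-2*ρ*(t-a)) ≤ M^2 * 1 := by
          apply mul_le_mul hsq hexp (Real.exp_pos _).le (by positivity)
      _ = M^2 := by ring
  -- integrate
  have hcont : Continuous fun t : ℝ =>
      ((χ (b-a)).eval ((2*t - (a+b)) / (b-a))) ^ 2 * Real.exp (-2*ρ*(t-a)) := by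
    apply Continuous.mul
    · apply Continuous.pow
      exact (χ (b-a)).continuous_aeval.comp (by fun_prop)
    · fun_prop
  have hintle : (∫ t in Set.Ioo a b,
      ((χ (b-a)).eval ((2*t - (a+b)) / (b-a))) ^ 2 * Real.exp (-2*ρ*(t-a)))
        ≤ (b - a) * M^2 := by
    have h1 : (∫ t in Set.Ioo a b,
        ((χ (b-a)).eval ((2*t - (a+b)) / (b-a))) ^ 2 * Real.exp (-2*ρ*(t-a)))
          ≤ ∫ _t in Set.Ioo a b, M^2 := by
      apply setIntegral_mono_on
      · exact hcont.integrableOn_Icc.mono_set Set.Ioo_subset_Icc_self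
      · exact (integrableOn_const_iff).mpr (Or.inr (by rw [Real.volume_Ioo]; exact ENNReal.ofReal_lt_top))
      · exact measurableSet_Ioo
      · exact hpt
    have h2 : (∫ _t in Set.Ioo a b, (M^2 : ℝ)) = (b - a) * M^2 := by
      rw [setIntegral_const, Real.volume_real_Ioo_of_le hab.le]
      simp [smul_eq_mul]
    linarith [h1, h2.le, h2.ge]
  rw [one_div, inv_mul_le_iff₀ (by linarith : (0:ℝ) < b - a)]
  calc (∫ t in Set.Ioo a b,
      ((χ (b-a)).eval ((2*t - (a+b)) / (b-a))) ^ 2 * Real.exp (-2*ρ*(t-a)))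
        ≤ (b-a) * M^2 := hintle
    _ = (b-a) * M^2 := rfl
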